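/- The sum map of a countable family of formal reproducing kernels is a coisometry: let F be a complex Hilbert space, J a countable index set, and for each j ∈ J let (H_j, (π^j_n)_{n ∈ ℤ^d}) be coefficient data of a formal reproducing kernel Hilbert space with coefficient space F. Let (G, (ρ_n)_{n ∈ ℤ^d}) be coefficient data with coefficient space F and with (ρ_n) separating, and assume that for all n, m ∈ ℤ^d the sum Σ_{j ∈ J} π^j_n (π^j_m)^* converges in the weak operator topology to ρ_n ρ_m^*. Then: (i) for every n ∈ ℤ^d and every element f = (f_j)_{j ∈ J} of the Hilbert space direct sum ⊕_{j ∈ J} H_j, the series Σ_{j ∈ J} π^j_n f_j converges in F; (ii) there is a unique bounded linear operator s : ⊕_{j ∈ J} H_j → G such that ρ_n(s f) = Σ_{j ∈ J} π^j_n f_j for all f and all n; (iii) s is a coisometry (s s^* = I_G) whose initial space, i.e. the orthogonal complement of ker s, is the closed linear span of the vectors ((π^j_m)^* u)_{j ∈ J} (m ∈ ℤ^d, u ∈ F), each of which lies in ⊕_{j ∈ J} H_j. -/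

import Mathlib

open ContinuousLinearMap

set_option linter.unusedSectionVars false

noncomputable section AuxFRKHS

local notation "⟪" x ", " y "⟫" => @inner ℂ _ _ x y

variable {d : ℕ} {F : Type*} [NormedAddCommGroup F] [InnerProductSpace ℂ F] [CompleteSpace F]
    {J : Type*} [Countable J]
    {H : J → Type*} [∀ j, NormedAddCommGroup (H j)] [∀ j, InnerProductSpace ℂ (H j)]
    [∀ j, CompleteSpace (H j)]
    {G : Type*} [NormedAddCommGroup G] [InnerProductSpace ℂ G] [CompleteSpace G]
    (π : ∀ j, (Fin d → ℤ) → H j →L[ℂ] F)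
    (ρ : (Fin d → ℤ) → G →L[ℂ] F)

theorem frkhs_hasSum_norm_sq
    (hker : ∀ (n m : Fin d → ℤ) (x y : F),
      HasSum (fun j => (⟪π j n (adjoint (π j m) x), y⟫ : ℂ))
        (⟪ρ n (adjoint (ρ m) x), y⟫ : ℂ))
    (m : Fin d → ℤ) (u : F) :
    HasSum (fun j => ‖adjoint (π j m) u‖ ^ 2) (‖adjoint (ρ m) u‖ ^ 2) := by
  have h := hker m m u u
  simp only [← adjoint_inner_right, inner_self_eq_norm_sq_to_K] at h
  have h2 := h.mapL Complex.reCLM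
  simpa [← Complex.ofReal_pow] using h2

theorem frkhs_memℓp
    (hker : ∀ (n m : Fin d → ℤ) (x y : F),
      HasSum (fun j => (⟪π j n (adjoint (π j m) x), y⟫ : ℂ))
        (⟪ρ n (adjoint (ρ m) x), y⟫ : ℂ))
    (m : Fin d → ℤ) (u : F) :
    Memℓp (fun j => adjoint (π j m) u) 2 := by
  apply memℓp_gen
  have h := (frkhs_hasSum_norm_sq π ρ hker m u).summable
  simpa [show ((2:ENNReal)).toReal = ((2:ℕ):ℝ) by norm_num, Real.rpow_natCast] using h

theorem frkhs_finset_bound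
    (hker : ∀ (n m : Fin d → ℤ) (x y : F),
      HasSum (fun j => (⟪π j n (adjoint (π j m) x), y⟫ : ℂ))
        (⟪ρ n (adjoint (ρ m) x), y⟫ : ℂ))
    (n : Fin d → ℤ) (g : ∀ j, H j) (S : Finset J) :
    ‖∑ j ∈ S, π j n (g j)‖ ≤ ‖ρ n‖ * Real.sqrt (∑ j ∈ S, ‖g j‖ ^ 2) := by
  set v := ∑ j ∈ S, π j n (g j) with hv
  have h1 : (⟪v, v⟫ : ℂ) = ∑ j ∈ S, ⟪g j, adjoint (π j n) v⟫ := by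
    rw [hv, sum_inner]
    exact Finset.sum_congr rfl fun j _ => (adjoint_inner_right _ _ _).symm
  have h2 : ‖v‖ ^ 2 ≤ ∑ j ∈ S, ‖g j‖ * ‖adjoint (π j n) v‖ := by
    rw [@norm_sq_eq_re_inner ℂ, h1, map_sum]
    refine Finset.sum_le_sum fun j _ => ?_
    exact (RCLike.re_le_norm _).trans (norm_inner_le_norm _ _)
  have h3 : ∑ j ∈ S, ‖g j‖ * ‖adjoint (π j n) v‖ ≤
      Real.sqrt (∑ j ∈ S, ‖g j‖ ^ 2) * Real.sqrt (∑ j ∈ S, ‖adjoint (π j n) v‖ ^ 2) := by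
    have h := Finset.sum_mul_sq_le_sq_mul_sq S (fun j => ‖g j‖) (fun j => ‖adjoint (π j n) v‖)
    have hnn : (0:ℝ) ≤ ∑ j ∈ S, ‖g j‖ * ‖adjoint (π j n) v‖ :=
      Finset.sum_nonneg fun j _ => mul_nonneg (norm_nonneg _) (norm_nonneg _)
    calc ∑ j ∈ S, ‖g j‖ * ‖adjoint (π j n) v‖
        = Real.sqrt ((∑ j ∈ S, ‖g j‖ * ‖adjoint (π j n) v‖) ^ 2) := (Real.sqrt_sq hnn).symm
      _ ≤ Real.sqrt ((∑ j ∈ S, ‖g j‖ ^ 2) * ∑ j ∈ S, ‖adjoint (π j n) v‖ ^ 2) :=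
          Real.sqrt_le_sqrt h
      _ = _ := Real.sqrt_mul (Finset.sum_nonneg fun j _ => sq_nonneg _) _
  have h4 : ∑ j ∈ S, ‖adjoint (π j n) v‖ ^ 2 ≤ ‖adjoint (ρ n) v‖ ^ 2 :=
    sum_le_hasSum S (fun _ _ => sq_nonneg _) (frkhs_hasSum_norm_sq π ρ hker n v)
  have h5 : ‖adjoint (ρ n) v‖ ≤ ‖ρ n‖ * ‖v‖ := by
    calc ‖adjoint (ρ n) v‖ ≤ ‖adjoint (ρ n)‖ * ‖v‖ := le_opNorm _ _
      _ = ‖ρ n‖ * ‖v‖ := by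
          rw [show ‖adjoint (ρ n)‖ = ‖ρ n‖ from LinearIsometryEquiv.norm_map adjoint (ρ n)]
  have h6 : Real.sqrt (∑ j ∈ S, ‖adjoint (π j n) v‖ ^ 2) ≤ ‖ρ n‖ * ‖v‖ := by
    calc Real.sqrt (∑ j ∈ S, ‖adjoint (π j n) v‖ ^ 2)
        ≤ Real.sqrt (‖adjoint (ρ n) v‖ ^ 2) := Real.sqrt_le_sqrt h4
      _ = ‖adjoint (ρ n) v‖ := Real.sqrt_sq (norm_nonneg _)
      _ ≤ ‖ρ n‖ * ‖v‖ := h5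
  have h7 : ‖v‖ ^ 2 ≤ Real.sqrt (∑ j ∈ S, ‖g j‖ ^ 2) * (‖ρ n‖ * ‖v‖) :=
    h2.trans (h3.trans (mul_le_mul_of_nonneg_left h6 (Real.sqrt_nonneg _)))
  rcases eq_or_lt_of_le (norm_nonneg v) with hv0 | hv0
  · rw [← hv0]; positivity
  · have := h7
    rw [pow_two] at this
    have h8 : ‖v‖ * ‖v‖ ≤ (‖ρ n‖ * Real.sqrt (∑ j ∈ S, ‖g j‖ ^ 2)) * ‖v‖ := by ring_nf; ring_nf at this; linarith
    exact le_of_mul_le_mul_right h8 hv0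

theorem frkhs_summable
    (hker : ∀ (n m : Fin d → ℤ) (x y : F),
      HasSum (fun j => (⟪π j n (adjoint (π j m) x), y⟫ : ℂ))
        (⟪ρ n (adjoint (ρ m) x), y⟫ : ℂ))
    (n : Fin d → ℤ) (f : lp (fun j => H j) 2) :
    Summable fun j => π j n (f j) := by
  rw [summable_iff_vanishing_norm]
  intro ε hε
  set C := ‖ρ n‖ + 1 with hC
  have hCpos : (0:ℝ) < C := by positivity
  have hf2 : Summable fun j => ‖f j‖ ^ 2 := by
    have h := (lp.memℓp f).summable (p := 2) (by norm_num)
    simpa [show ((2:ENNReal)).toReal = ((2:ℕ):ℝ) by norm_num, Real.rpow_natCast] using h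
  obtain ⟨s, hs⟩ := summable_iff_vanishing_norm.1 hf2 ((ε / C) ^ 2) (by positivity)
  refine ⟨s, fun t ht => ?_⟩
  have h2 : ∑ j ∈ t, ‖f j‖ ^ 2 < (ε / C) ^ 2 := by
    have := hs t ht
    rwa [Real.norm_eq_abs, abs_of_nonneg (Finset.sum_nonneg fun j _ => sq_nonneg _)] at this
  have h3 : Real.sqrt (∑ j ∈ t, ‖f j‖ ^ 2) < ε / C := by
    rw [show ε / C = Real.sqrt ((ε / C) ^ 2) from (Real.sqrt_sq (by positivity)).symm]
    exact Real.sqrt_lt_sqrt (Finset.sum_nonneg fun j _ => sq_nonneg _) h2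
  calc ‖∑ j ∈ t, π j n (f j)‖
      ≤ ‖ρ n‖ * Real.sqrt (∑ j ∈ t, ‖f j‖ ^ 2) := frkhs_finset_bound π ρ hker n _ t
    _ ≤ ‖ρ n‖ * (ε / C) := mul_le_mul_of_nonneg_left h3.le (norm_nonneg _)
    _ < C * (ε / C) := by
        have : ‖ρ n‖ < C := by rw [hC]; linarith
        exact mul_lt_mul_of_pos_right this (by positivity)
    _ = ε := by field_simp

theorem frkhs_tsum_bound
    (hker : ∀ (n m : Fin d → ℤ) (x y : F),
      HasSum (fun j => (⟪π j n (adjoint (π j m) x), y⟫ : ℂ))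
        (⟪ρ n (adjoint (ρ m) x), y⟫ : ℂ))
    (n : Fin d → ℤ) (f : lp (fun j => H j) 2) :
    ‖∑' j, π j n (f j)‖ ≤ ‖ρ n‖ * ‖f‖ := by
  have hsum := (frkhs_summable π ρ hker n f).hasSum
  refine le_of_tendsto' hsum.norm ?_
  intro S
  calc ‖∑ j ∈ S, π j n (f j)‖
      ≤ ‖ρ n‖ * Real.sqrt (∑ j ∈ S, ‖f j‖ ^ 2) := frkhs_finset_bound π ρ hker n _ S
    _ ≤ ‖ρ n‖ * ‖f‖ := by
        refine mul_le_mul_of_nonneg_left ?_ (norm_nonneg _)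
        have h1 : ∑ j ∈ S, ‖f j‖ ^ 2 ≤ ‖f‖ ^ 2 := by
          have := lp.sum_rpow_le_norm_rpow (p := 2) (by norm_num) f S
          simpa [show ((2:ENNReal)).toReal = ((2:ℕ):ℝ) by norm_num, Real.rpow_natCast] using this
        calc Real.sqrt (∑ j ∈ S, ‖f j‖ ^ 2) ≤ Real.sqrt (‖f‖ ^ 2) := Real.sqrt_le_sqrt h1
          _ = ‖f‖ := Real.sqrt_sq (norm_nonneg _)

theorem frkhs_hasSum_inner
    (hker : ∀ (n m : Fin d → ℤ) (x y : F),
      HasSum (fun j => (⟪π j n (adjoint (π j m) x), y⟫ : ℂ))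
        (⟪ρ n (adjoint (ρ m) x), y⟫ : ℂ))
    (n : Fin d → ℤ) (f : lp (fun j => H j) 2) (y : F) :
    HasSum (fun j => (⟪π j n (f j), y⟫ : ℂ)) (⟪∑' j, π j n (f j), y⟫ : ℂ) := by
  have h := (frkhs_summable π ρ hker n f).hasSum
  have h1 := h.mapL (innerSL ℂ y)
  have h2 := h1.star
  simpa [RCLike.star_def, inner_conj_symm] using h2

theorem frkhs_inner_Klp
    (hker : ∀ (n m : Fin d → ℤ) (x y : F),
      HasSum (fun j => (⟪π j n (adjoint (π j m) x), y⟫ : ℂ))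
        (⟪ρ n (adjoint (ρ m) x), y⟫ : ℂ))
    (m : Fin d → ℤ) (u : F) (f : lp (fun j => H j) 2) :
    (⟪f, (⟨fun j => adjoint (π j m) u, frkhs_memℓp π ρ hker m u⟩ : lp (fun j => H j) 2)⟫ : ℂ)
      = ⟪∑' j, π j m (f j), u⟫ := by
  rw [lp.inner_eq_tsum]
  rw [show (fun j => (⟪f j, adjoint (π j m) u⟫ : ℂ)) = fun j => (⟪π j m (f j), u⟫ : ℂ) from
    funext fun j => adjoint_inner_right _ _ _]
  exact (frkhs_hasSum_inner π ρ hker m f u).tsum_eq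


noncomputable def frkhsE (π : ∀ j, (Fin d → ℤ) → H j →L[ℂ] F) (n : Fin d → ℤ)
    (f : lp (fun j => H j) 2) : F := ∑' j, π j n (f j)

theorem frkhsE_def (n : Fin d → ℤ) (f : lp (fun j => H j) 2) :
    frkhsE π n f = ∑' j, π j n (f j) := rfl

noncomputable def frkhsK
    (hker : ∀ (n m : Fin d → ℤ) (x y : F),
      HasSum (fun j => (⟪π j n (adjoint (π j m) x), y⟫ : ℂ))
        (⟪ρ n (adjoint (ρ m) x), y⟫ : ℂ))
    (m : Fin d → ℤ) (u : F) : lp (fun j => H j) 2 :=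
  ⟨fun j => adjoint (π j m) u, frkhs_memℓp π ρ hker m u⟩

theorem frkhs_inner_K
    (hker : ∀ (n m : Fin d → ℤ) (x y : F),
      HasSum (fun j => (⟪π j n (adjoint (π j m) x), y⟫ : ℂ))
        (⟪ρ n (adjoint (ρ m) x), y⟫ : ℂ))
    (m : Fin d → ℤ) (u : F) (f : lp (fun j => H j) 2) :
    (⟪f, frkhsK π ρ hker m u⟫ : ℂ) = ⟪frkhsE π m f, u⟫ :=
  frkhs_inner_Klp π ρ hker m u f

theorem frkhsK_sol
    (hker : ∀ (n m : Fin d → ℤ) (x y : F),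
      HasSum (fun j => (⟪π j n (adjoint (π j m) x), y⟫ : ℂ))
        (⟪ρ n (adjoint (ρ m) x), y⟫ : ℂ))
    (m : Fin d → ℤ) (u : F) (n : Fin d → ℤ) :
    ρ n (adjoint (ρ m) u) = frkhsE π n (frkhsK π ρ hker m u) := by
  refine ext_inner_right ℂ fun y => ?_
  exact (hker n m u y).unique (frkhs_hasSum_inner π ρ hker n (frkhsK π ρ hker m u) y)

theorem frkhsE_zero (n : Fin d → ℤ) : frkhsE π n (0 : lp (fun j => H j) 2) = 0 := by
  have h : ∀ j, π j n ((0 : lp (fun j => H j) 2) j) = 0 := fun j => by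
    rw [lp.coeFn_zero, Pi.zero_apply, map_zero]
  rw [frkhsE_def, tsum_congr h, tsum_zero]

theorem frkhsE_add
    (hker : ∀ (n m : Fin d → ℤ) (x y : F),
      HasSum (fun j => (⟪π j n (adjoint (π j m) x), y⟫ : ℂ))
        (⟪ρ n (adjoint (ρ m) x), y⟫ : ℂ))
    (n : Fin d → ℤ) (f g : lp (fun j => H j) 2) :
    frkhsE π n (f + g) = frkhsE π n f + frkhsE π n g := by
  have h : ∀ j, π j n ((f + g) j) = π j n (f j) + π j n (g j) := fun j => by
    rw [lp.coeFn_add, Pi.add_apply, map_add]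
  rw [frkhsE_def, frkhsE_def, frkhsE_def, tsum_congr h,
    Summable.tsum_add (frkhs_summable π ρ hker n f) (frkhs_summable π ρ hker n g)]

theorem frkhsE_smul
    (hker : ∀ (n m : Fin d → ℤ) (x y : F),
      HasSum (fun j => (⟪π j n (adjoint (π j m) x), y⟫ : ℂ))
        (⟪ρ n (adjoint (ρ m) x), y⟫ : ℂ))
    (n : Fin d → ℤ) (c : ℂ) (f : lp (fun j => H j) 2) :
    frkhsE π n (c • f) = c • frkhsE π n f := by
  have h : ∀ j, π j n ((c • f) j) = c • π j n (f j) := fun j => by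
    rw [lp.coeFn_smul, Pi.smul_apply, map_smul]
  rw [frkhsE_def, frkhsE_def, tsum_congr h,
    ((frkhs_summable π ρ hker n f).hasSum.const_smul c).tsum_eq]

theorem frkhsE_sub
    (hker : ∀ (n m : Fin d → ℤ) (x y : F),
      HasSum (fun j => (⟪π j n (adjoint (π j m) x), y⟫ : ℂ))
        (⟪ρ n (adjoint (ρ m) x), y⟫ : ℂ))
    (n : Fin d → ℤ) (f g : lp (fun j => H j) 2) :
    frkhsE π n (f - g) = frkhsE π n f - frkhsE π n g := by
  have h1 : f - g + g = f := by abel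
  rw [eq_sub_iff_add_eq, ← frkhsE_add π ρ hker, h1]

end AuxFRKHS

set_option maxHeartbeats 1000000 in
open ContinuousLinearMap in
/-- **The sum map of a countable family of formal reproducing kernels is a coisometry.**
Let `(H_j, π^j)` (`j ∈ J`, `J` countable) be coefficient data of formal reproducing
kernel Hilbert spaces with common coefficient space `F`, and `(G, ρ)` coefficient data
with `ρ` separating such that `∑_j π^j_n (π^j_m)* = ρ_n ρ_m*` (WOT-convergent sums).
Then the coefficientwise sums converge on the Hilbert-space direct sum `⊕_j H_j`, they
define a unique bounded operator `s : ⊕_j H_j → G`, and `s` is a coisometry whose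
initial space is the closed span of the kernel elements `((π^j_m)* u)_j`. -/
theorem sum_map_coisometry
    {d : ℕ} {F : Type*} [NormedAddCommGroup F] [InnerProductSpace ℂ F] [CompleteSpace F]
    {J : Type*} [Countable J]
    (H : J → Type*) [∀ j, NormedAddCommGroup (H j)] [∀ j, InnerProductSpace ℂ (H j)]
    [∀ j, CompleteSpace (H j)]
    {G : Type*} [NormedAddCommGroup G] [InnerProductSpace ℂ G] [CompleteSpace G]
    (π : ∀ j, (Fin d → ℤ) → H j →L[ℂ] F)
    (ρ : (Fin d → ℤ) → G →L[ℂ] F)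
    (hsep : ∀ g : G, (∀ n, ρ n g = 0) → g = 0)
    (hker : ∀ (n m : Fin d → ℤ) (x y : F),
      HasSum (fun j => (inner ℂ (π j n (adjoint (π j m) x)) y : ℂ))
        (inner ℂ (ρ n (adjoint (ρ m) x)) y : ℂ)) :
    (∀ (n : Fin d → ℤ) (f : lp (fun j => H j) 2), Summable fun j => π j n (f j)) ∧
    ∃ s : lp (fun j => H j) 2 →L[ℂ] G,
      (∀ (f : lp (fun j => H j) 2) (n : Fin d → ℤ), ρ n (s f) = ∑' j, π j n (f j)) ∧
      (∀ s' : lp (fun j => H j) 2 →L[ℂ] G,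
        (∀ (f : lp (fun j => H j) 2) (n : Fin d → ℤ), ρ n (s' f) = ∑' j, π j n (f j)) →
        s' = s) ∧
      s ∘L adjoint s = 1 ∧
      (∀ (m : Fin d → ℤ) (u : F), Memℓp (fun j => adjoint (π j m) u) 2) ∧
      (LinearMap.ker (s : lp (fun j => H j) 2 →ₗ[ℂ] G))ᗮ =
        (Submodule.span ℂ
          {g : lp (fun j => H j) 2 | ∃ m u, ∀ j, g j = adjoint (π j m) u}).topologicalClosure := by
  classical
  set D' : Submodule ℂ (lp (fun j => H j) 2) :=
    Submodule.span ℂ {g : lp (fun j => H j) 2 | ∃ m u, ∀ j, g j = adjoint (π j m) u}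
    with hD'def
  set Γ : Submodule ℂ (G × lp (fun j => H j) 2) :=
    Submodule.span ℂ {p | ∃ m u, p = (adjoint (ρ m) u, frkhsK π ρ hker m u)} with hΓdef
  set M : Submodule ℂ G := Submodule.span ℂ {h | ∃ m u, h = adjoint (ρ m) u} with hMdef
  -- solutions along Γ
  have hΓsol : ∀ p ∈ Γ, ∀ n, ρ n p.1 = frkhsE π n p.2 := by
    intro p hp
    induction hp using Submodule.span_induction with
    | mem p hp =>
      obtain ⟨m, u, rfl⟩ := hp
      intro n
      exact frkhsK_sol π ρ hker m u n
    | zero => intro n; simp [frkhsE_zero]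
    | add x y hx hy ihx ihy =>
      intro n
      simp only [Prod.fst_add, Prod.snd_add, map_add, frkhsE_add π ρ hker, ihx n, ihy n]
    | smul c x hx ihx =>
      intro n
      simp only [Prod.smul_fst, Prod.smul_snd, map_smul, frkhsE_smul π ρ hker, ihx n]
  -- Γ preserves inner ℂ products
  have hΓinner : ∀ p ∈ Γ, ∀ q ∈ Γ, (inner ℂ p.2 q.2 : ℂ) = inner ℂ p.1 q.1 := by
    intro p hp q hq
    induction hp, hq using Submodule.span_induction₂ with
    | mem_mem x y hx hy =>
      obtain ⟨m, u, rfl⟩ := hx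
      obtain ⟨m', u', rfl⟩ := hy
      rw [lp.inner_eq_tsum]
      calc (∑' j, (inner ℂ ((frkhsK π ρ hker m u) j) ((frkhsK π ρ hker m' u') j) : ℂ))
          = ∑' j, (inner ℂ (π j m' (adjoint (π j m) u)) u' : ℂ) :=
            tsum_congr fun j => adjoint_inner_right _ _ _
        _ = inner ℂ (ρ m' (adjoint (ρ m) u)) u' := (hker m' m u u').tsum_eq
        _ = inner ℂ (adjoint (ρ m) u) (adjoint (ρ m') u') := (adjoint_inner_right _ _ _).symm
    | zero_left y hy => simp
    | zero_right x hx => simp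
    | add_left x y z hx hy hz h1 h2 =>
      simp only [Prod.fst_add, Prod.snd_add, inner_add_left, h1, h2]
    | add_right x y z hx hy hz h1 h2 =>
      simp only [Prod.fst_add, Prod.snd_add, inner_add_right, h1, h2]
    | smul_left r x y hx hy h =>
      simp only [Prod.smul_fst, Prod.smul_snd, inner_smul_left, h]
    | smul_right r x y hx hy h =>
      simp only [Prod.smul_fst, Prod.smul_snd, inner_smul_right, h]
  -- density of M in G
  have hMperp : Mᗮ = ⊥ := by
    rw [Submodule.eq_bot_iff]
    intro g hg
    refine hsep g fun n => ?_
    have h1 : ∀ u : F, (inner ℂ u (ρ n g) : ℂ) = 0 := by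
      intro u
      have h2 := (Submodule.mem_orthogonal M g).1 hg (adjoint (ρ n) u)
        (Submodule.subset_span ⟨n, u, rfl⟩)
      rwa [adjoint_inner_left] at h2
    have h3 := h1 (ρ n g)
    rwa [inner_self_eq_zero] at h3
  have hMdense : Dense (M : Set G) := by
    refine Submodule.dense_iff_topologicalClosure_eq_top.2 ?_
    rw [← Submodule.orthogonal_orthogonal_eq_closure, hMperp, Submodule.bot_orthogonal_eq_top]
  -- any solution is norm-bounded
  have hbound : ∀ (f : lp (fun j => H j) 2) (g : G),
      (∀ n, ρ n g = frkhsE π n f) → ‖g‖ ≤ ‖f‖ := by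
    intro f g hsol
    have key : ∀ p ∈ Γ, (inner ℂ g p.1 : ℂ) = inner ℂ f p.2 := by
      intro p hp
      induction hp using Submodule.span_induction with
      | mem x hx =>
        obtain ⟨m, u, rfl⟩ := hx
        calc (inner ℂ g (adjoint (ρ m) u) : ℂ) = inner ℂ (ρ m g) u := adjoint_inner_right _ _ _
          _ = inner ℂ (frkhsE π m f) u := by rw [hsol m]
          _ = inner ℂ f (frkhsK π ρ hker m u) := (frkhs_inner_K π ρ hker m u f).symm
      | zero => simp
      | add x y hx hy ihx ihy =>
        simp only [Prod.fst_add, Prod.snd_add, inner_add_right, ihx, ihy]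
      | smul c x hx ih =>
        simp only [Prod.smul_fst, Prod.smul_snd, inner_smul_right, ih]
    have hb : ∀ h ∈ M, ‖(inner ℂ g h : ℂ)‖ ≤ ‖f‖ * ‖h‖ := by
      intro h hh
      have hcomp : ∃ k, (h, k) ∈ Γ := by
        induction hh using Submodule.span_induction with
        | mem x hx =>
          obtain ⟨m, u, rfl⟩ := hx
          exact ⟨frkhsK π ρ hker m u, Submodule.subset_span ⟨m, u, rfl⟩⟩
        | zero => exact ⟨0, Submodule.zero_mem _⟩
        | add x y hx hy ihx ihy =>
          obtain ⟨k1, h1⟩ := ihx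
          obtain ⟨k2, h2⟩ := ihy
          exact ⟨k1 + k2, Submodule.add_mem _ h1 h2⟩
        | smul c x hx ih =>
          obtain ⟨k, h1⟩ := ih
          exact ⟨c • k, Submodule.smul_mem _ c h1⟩
      obtain ⟨k, hk⟩ := hcomp
      have e1 : (inner ℂ g h : ℂ) = inner ℂ f k := key _ hk
      have e2 : (inner ℂ k k : ℂ) = inner ℂ h h := hΓinner _ hk _ hk
      have e3 : ‖k‖ = ‖h‖ := by
        rw [inner_self_eq_norm_sq_to_K, inner_self_eq_norm_sq_to_K] at e2
        have e4 : (‖k‖ : ℝ) ^ 2 = ‖h‖ ^ 2 := by exact_mod_cast e2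
        calc ‖k‖ = Real.sqrt (‖k‖ ^ 2) := (Real.sqrt_sq (norm_nonneg _)).symm
          _ = Real.sqrt (‖h‖ ^ 2) := by rw [e4]
          _ = ‖h‖ := Real.sqrt_sq (norm_nonneg _)
      rw [e1, ← e3]
      exact norm_inner_le_norm _ _
    have hball : ∀ h : G, ‖(inner ℂ g h : ℂ)‖ ≤ ‖f‖ * ‖h‖ := by
      have hclosed : IsClosed {h : G | ‖(inner ℂ g h : ℂ)‖ ≤ ‖f‖ * ‖h‖} :=
        isClosed_le (Continuous.norm (Continuous.inner continuous_const continuous_id))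
          (continuous_const.mul continuous_norm)
      intro h
      exact hclosed.closure_subset_iff.2 (fun x hx => hb x hx) (hMdense h)
    have h4 : ‖g‖ ^ 2 ≤ ‖f‖ * ‖g‖ := by
      calc ‖g‖ ^ 2 = RCLike.re (inner ℂ g g : ℂ) := norm_sq_eq_re_inner (𝕜 := ℂ) g
        _ ≤ ‖(inner ℂ g g : ℂ)‖ := RCLike.re_le_norm _
        _ ≤ ‖f‖ * ‖g‖ := hball g
    rcases eq_or_lt_of_le (norm_nonneg g) with h0 | h0
    · rw [← h0]; exact norm_nonneg f
    · have h5 : ‖g‖ * ‖g‖ ≤ ‖f‖ * ‖g‖ := by rwa [pow_two] at h4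
      exact le_of_mul_le_mul_right h5 h0
  -- uniqueness of solutions
  have hSolU : ∀ (f : lp (fun j => H j) 2) (g g' : G),
      (∀ n, ρ n g = frkhsE π n f) → (∀ n, ρ n g' = frkhsE π n f) → g = g' := by
    intro f g g' h1 h2
    have h3 : g - g' = 0 := hsep _ (fun n => by rw [map_sub, h1 n, h2 n, sub_self])
    exact sub_eq_zero.1 h3
  -- existence on the kernel span
  have hD'Γ : ∀ f ∈ D', ∃ h, (h, f) ∈ Γ := by
    intro f hf
    induction hf using Submodule.span_induction with
    | mem x hx =>
      obtain ⟨m, u, hmu⟩ := hx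
      have hx2 : x = frkhsK π ρ hker m u := Subtype.ext (funext hmu)
      exact ⟨adjoint (ρ m) u, Submodule.subset_span ⟨m, u, by rw [hx2]⟩⟩
    | zero => exact ⟨0, Submodule.zero_mem _⟩
    | add x y hx hy ihx ihy =>
      obtain ⟨h1, m1⟩ := ihx
      obtain ⟨h2, m2⟩ := ihy
      exact ⟨h1 + h2, Submodule.add_mem _ m1 m2⟩
    | smul c x hx ih =>
      obtain ⟨h1, m1⟩ := ih
      exact ⟨c • h1, Submodule.smul_mem _ c m1⟩
  -- on the orthocomplement the coefficient sums vanish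
  have hDperp : ∀ f ∈ D'ᗮ, ∀ n, frkhsE π n f = 0 := by
    intro f hf n
    refine ext_inner_right ℂ fun u => ?_
    have h1 : (inner ℂ (frkhsK π ρ hker n u) f : ℂ) = 0 :=
      (Submodule.mem_orthogonal D' f).1 hf _ (Submodule.subset_span ⟨n, u, fun j => rfl⟩)
    have h2 : (inner ℂ f (frkhsK π ρ hker n u) : ℂ) = 0 := by
      rw [← inner_conj_symm, h1, map_zero]
    rw [← frkhs_inner_K π ρ hker n u f, h2, inner_zero_left]
  -- existence of solutions for all f
  have hexists : ∀ f : lp (fun j => H j) 2, ∃ g, ∀ n, ρ n g = frkhsE π n f := by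
    intro f
    haveI : CompleteSpace (D'.topologicalClosure) :=
      (Submodule.isClosed_topologicalClosure _).completeSpace_coe
    obtain ⟨a, ha, b, hb, hab⟩ := (D'.topologicalClosure).exists_add_mem_mem_orthogonal f
    have hb' : b ∈ D'ᗮ := Submodule.orthogonal_le D'.le_topologicalClosure hb
    have hbE : ∀ n, frkhsE π n b = 0 := hDperp b hb'
    have ha' : a ∈ closure (D' : Set (lp (fun j => H j) 2)) := by
      rw [← Submodule.topologicalClosure_coe]; exact ha
    obtain ⟨x, hx, hxa⟩ := mem_closure_iff_seq_limit.1 ha'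
    choose gk hgk using fun k => hD'Γ (x k) (hx k)
    have hsolk : ∀ k n, ρ n (gk k) = frkhsE π n (x k) := fun k n => hΓsol _ (hgk k) n
    have hgcauchy : CauchySeq gk := by
      rw [Metric.cauchySeq_iff]
      intro ε hε
      obtain ⟨N, hN⟩ := Metric.cauchySeq_iff.1 hxa.cauchySeq ε hε
      refine ⟨N, fun i hi j hj => ?_⟩
      have hdiff : ∀ n, ρ n (gk i - gk j) = frkhsE π n (x i - x j) := fun n => by
        rw [map_sub, hsolk, hsolk, frkhsE_sub π ρ hker]
      calc dist (gk i) (gk j) = ‖gk i - gk j‖ := dist_eq_norm _ _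
        _ ≤ ‖x i - x j‖ := hbound _ _ hdiff
        _ = dist (x i) (x j) := (dist_eq_norm _ _).symm
        _ < ε := hN i hi j hj
    obtain ⟨g, hg⟩ := cauchySeq_tendsto_of_complete hgcauchy
    have hgsol : ∀ n, ρ n g = frkhsE π n a := by
      intro n
      have t1 : Filter.Tendsto (fun k => ρ n (gk k)) Filter.atTop (nhds (ρ n g)) :=
        ((ρ n).continuous.tendsto g).comp hg
      have t1' : Filter.Tendsto (fun k => frkhsE π n (x k)) Filter.atTop (nhds (ρ n g)) :=
        t1.congr fun k => hsolk k n
      have t2 : Filter.Tendsto (fun k => frkhsE π n (x k)) Filter.atTop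
          (nhds (frkhsE π n a)) := by
        rw [← tendsto_sub_nhds_zero_iff]
        have hb1 : ∀ k, ‖frkhsE π n (x k) - frkhsE π n a‖ ≤ ‖ρ n‖ * ‖x k - a‖ := fun k => by
          rw [← frkhsE_sub π ρ hker]
          exact frkhs_tsum_bound π ρ hker n _
        have hx0 : Filter.Tendsto (fun k => ‖ρ n‖ * ‖x k - a‖) Filter.atTop (nhds 0) := by
          have h6 := (tendsto_sub_nhds_zero_iff.2 hxa).norm
          have h7 := h6.const_mul ‖ρ n‖
          rw [norm_zero, mul_zero] at h7
          exact h7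
        exact squeeze_zero_norm hb1 hx0
      exact tendsto_nhds_unique t1' t2
    refine ⟨g, fun n => ?_⟩
    rw [hab, frkhsE_add π ρ hker, hbE, add_zero, hgsol]
  -- build the operator
  choose sfun hsfun using hexists
  have hadd : ∀ f f', sfun (f + f') = sfun f + sfun f' := fun f f' =>
    hSolU (f + f') _ _ (hsfun _)
      (fun n => by rw [map_add, hsfun, hsfun, frkhsE_add π ρ hker])
  have hsmulS : ∀ (c : ℂ) f, sfun (c • f) = c • sfun f := fun c f =>
    hSolU (c • f) _ _ (hsfun _)
      (fun n => by rw [map_smul, hsfun, frkhsE_smul π ρ hker])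
  set sLin : lp (fun j => H j) 2 →ₗ[ℂ] G :=
    { toFun := sfun, map_add' := hadd, map_smul' := hsmulS } with hsLin
  set s : lp (fun j => H j) 2 →L[ℂ] G :=
    LinearMap.mkContinuous sLin 1 (fun f => by
      rw [one_mul]; exact hbound f (sfun f) (hsfun f)) with hsdef
  have hs : ∀ (f : lp (fun j => H j) 2) (n : Fin d → ℤ),
      ρ n (s f) = ∑' j, π j n (f j) := fun f n => hsfun f n
  refine ⟨fun n f => frkhs_summable π ρ hker n f, s, hs, ?_, ?_,
    fun m u => frkhs_memℓp π ρ hker m u, ?_⟩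
  · -- uniqueness
    intro s' hs'
    refine ContinuousLinearMap.ext fun f => ?_
    exact hSolU f (s' f) (s f) (fun n => hs' f n) (fun n => hs f n)
  · -- coisometry
    have hsadj : ∀ m u, adjoint s (adjoint (ρ m) u) = frkhsK π ρ hker m u := by
      intro m u
      refine ext_inner_left ℂ fun f => ?_
      rw [adjoint_inner_right, adjoint_inner_right, hs f m]
      exact (frkhs_inner_K π ρ hker m u f).symm
    have hsK : ∀ m u, s (frkhsK π ρ hker m u) = adjoint (ρ m) u := by
      intro m u
      exact hSolU (frkhsK π ρ hker m u) _ _ (fun n => hs _ n)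
        (fun n => frkhsK_sol π ρ hker m u n)
    have hMfix : ∀ h ∈ M, s (adjoint s h) = h := by
      intro h hh
      induction hh using Submodule.span_induction with
      | mem x hx =>
        obtain ⟨m, u, rfl⟩ := hx
        rw [hsadj, hsK]
      | zero => simp
      | add x y hx hy ihx ihy => rw [map_add, map_add, ihx, ihy]
      | smul c x hx ih => rw [map_smul, map_smul, ih]
    have hfix : ∀ h, s (adjoint s h) = h := by
      have hclosed : IsClosed {h : G | s (adjoint s h) = h} :=
        isClosed_eq (s.continuous.comp (adjoint s).continuous) continuous_id
      intro h
      exact hclosed.closure_subset_iff.2 (fun x hx => hMfix x hx) (hMdense h)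
    exact ContinuousLinearMap.ext fun h => by simpa using hfix h
  · -- initial space
    have hker_eq : LinearMap.ker (s : lp (fun j => H j) 2 →ₗ[ℂ] G) = D'ᗮ := by
      ext f
      constructor
      · intro hf
        have hf0 : s f = 0 := LinearMap.mem_ker.1 hf
        have h0 : ∀ n, frkhsE π n f = 0 := fun n => by
          rw [frkhsE_def, ← hs f n, hf0, map_zero]
        rw [Submodule.mem_orthogonal]
        intro x hx
        induction hx using Submodule.span_induction with
        | mem x hx =>
          obtain ⟨m, u, hmu⟩ := hx
          have hx2 : x = frkhsK π ρ hker m u := Subtype.ext (funext hmu)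
          rw [hx2, ← inner_conj_symm, frkhs_inner_K π ρ hker m u f, h0 m, inner_zero_left,
            map_zero]
        | zero => simp
        | add x y hx hy ihx ihy => rw [inner_add_left, ihx, ihy, add_zero]
        | smul c x hx ih => rw [inner_smul_left, ih, mul_zero]
      · intro hf
        have h0 : ∀ n, frkhsE π n f = 0 := hDperp f hf
        have hsf : s f = 0 := hSolU f (s f) 0 (fun n => hs f n)
          (fun n => by rw [map_zero, h0 n])
        exact LinearMap.mem_ker.2 hsf
    rw [hker_eq, Submodule.orthogonal_orthogonal_eq_closure]
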